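/- For any vertex-weighted graph (G, w), X_{(G,w)} = Σ_{A ⊆ E(G)} (−1)^{|A|} p_{π(G,w,A)}, where π(G,w,A) is the partition of w(V(G)) whose parts are the total weights of the vertex sets of the components of (V(G), A). -/

import Mathlib

open SimpleGraph

/-- Proper coloring for an edge set over `Sym2 V` (loops allowed): adjacent (or equal, for a
loop) endpoints must receive different colors. -/
def ProperCol {V : Type*} (E : Set (Sym2 V)) (k : V -> Nat) : Prop :=
  forall u v : V, s(u, v) ∈ E -> k u ≠ k v

/-- Weighted chromatic symmetric function `X_{(G,w)}` as a formal power series in the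
variables `x_0, x_1, …` : the coefficient of a monomial `d` is the number of proper
colorings whose total weight in color `i` is `d i` for every `i`. -/
noncomputable def csfW {V : Type*} (E : Set (Sym2 V)) (w : V -> Nat) : MvPowerSeries Nat Int :=
  fun d => (Nat.card {k : V -> Nat |
    ProperCol E k ∧ forall i : Nat, (∑ᶠ v ∈ {v : V | k v = i}, w v) = d i} : Int)

/-- Chromatic symmetric function `X_G` of a simple graph. -/
noncomputable def csf {V : Type*} (G : SimpleGraph V) : MvPowerSeries Nat Int :=
  csfW G.edgeSet (fun _ => 1)

/-- The power-sum symmetric function `p_k = Σ_i x_i ^ k`. -/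
noncomputable def psum (k : Nat) : MvPowerSeries Nat Int :=
  open scoped Classical in
  fun d => if ∃ i : Nat, d = Finsupp.single i k then 1 else 0

/-- `p_lam` for a multiset of parts `lam`. -/
noncomputable def pProd (m : Multiset Nat) : MvPowerSeries Nat Int :=
  (m.map psum).prod

/-- The multiset of the total `w`-weights of the vertex sets of the connected components
of `G`; with `w = 1` this is the partition `π(A)` of the orders of the components. -/
noncomputable def piW {V : Type*} [Finite V] (G : SimpleGraph V) (w : V -> Nat) : Multiset Nat :=
  letI : Fintype G.ConnectedComponent := Fintype.ofFinite _
  (Finset.univ : Finset G.ConnectedComponent).val.map fun c => ∑ᶠ v ∈ c.supp, w v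

open Finset

section Aux

variable {V : Type*} [Fintype V]

/-- weight profile of a coloring -/
noncomputable def Pw (w : V → ℕ) (k : V → ℕ) : ℕ →₀ ℕ :=
  ∑ v, Finsupp.single (k v) (w v)

lemma Pw_apply (w k : V → ℕ) (i : ℕ) :
    Pw w k i = ∑ v ∈ univ.filter (fun v => k v = i), w v := by
  classical
  rw [Pw, Finset.sum_apply', Finset.sum_filter]
  exact Finset.sum_congr rfl fun v _ => by rw [Finsupp.single_apply]

lemma prof_iff (w k : V → ℕ) (d : ℕ →₀ ℕ) :
    (∀ i : ℕ, (∑ᶠ v ∈ {v : V | k v = i}, w v) = d i) ↔ Pw w k = d := by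
  classical
  have h : ∀ i, (∑ᶠ v ∈ {v : V | k v = i}, w v) = Pw w k i := by
    intro i
    rw [Pw_apply]
    rw [← finsum_mem_coe_finset]
    congr 1
    ext v; simp
  constructor
  · intro H; ext i; rw [← h i, H i]
  · intro H i; rw [h i, H]

lemma color_mem_support {w k : V → ℕ} (hw : ∀ v, 0 < w v)
    {d : ℕ →₀ ℕ} (h : Pw w k = d) (v : V) : k v ∈ d.support := by
  classical
  rw [Finsupp.mem_support_iff, ← h]
  rw [Pw_apply]
  have : 0 < ∑ u ∈ univ.filter (fun u => k u = k v), w u :=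
    Finset.sum_pos' (fun _ _ => Nat.zero_le _)
      ⟨v, by simp, hw v⟩
  omega

open scoped Classical in
/-- all relevant colorings live in this finset -/
noncomputable def Om (d : ℕ →₀ ℕ) : Finset (V → ℕ) :=
  Fintype.piFinset fun _ => d.support

open scoped Classical in
lemma card_eq {w : V → ℕ} (hw : ∀ v, 0 < w v) (d : ℕ →₀ ℕ)
    (Q : (V → ℕ) → Prop) :
    (Nat.card {k : V → ℕ | Q k ∧ Pw w k = d} : ℤ) =
      ((Om (V := V) d).filter (fun k => Q k ∧ Pw w k = d)).card := by
  have hset : {k : V → ℕ | Q k ∧ Pw w k = d} =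
      ↑((Om (V := V) d).filter (fun k => Q k ∧ Pw w k = d)) := by
    ext k
    simp only [Set.mem_setOf_eq, Finset.coe_filter, Om, Fintype.mem_piFinset]
    exact ⟨fun h => ⟨fun v => color_mem_support hw h.2 v, h⟩, fun h => h.2⟩
  rw [hset, Nat.card_coe_set_eq, Set.ncard_coe_finset]

/-- component weight -/
noncomputable def fC (G : SimpleGraph V) (w : V → ℕ)
    (c : G.ConnectedComponent) : ℕ := ∑ᶠ v ∈ c.supp, w v

open scoped Classical in
lemma fC_eq (G : SimpleGraph V) (w : V → ℕ) (c : G.ConnectedComponent) :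
    fC G w c = ∑ v ∈ univ.filter (fun v => G.connectedComponentMk v = c), w v := by
  classical
  rw [fC, ← finsum_mem_coe_finset]
  congr 1
  ext v; simp [ConnectedComponent.mem_supp_iff]

lemma fC_pos (G : SimpleGraph V) {w : V → ℕ} (hw : ∀ v, 0 < w v)
    (c : G.ConnectedComponent) : 0 < fC G w c := by
  classical
  rw [fC_eq]
  refine Finset.sum_pos' (fun _ _ => Nat.zero_le _) ⟨c.out, ?_, hw _⟩
  simp only [Finset.mem_filter, Finset.mem_univ, true_and]
  exact c.out_eq

lemma Pw_comp (G : SimpleGraph V) (w : V → ℕ)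
    (κ : G.ConnectedComponent → ℕ) :
    letI : Fintype G.ConnectedComponent := Fintype.ofFinite _
    Pw w (fun v => κ (G.connectedComponentMk v)) =
      ∑ c : G.ConnectedComponent, Finsupp.single (κ c) (fC G w c) := by
  classical
  letI : Fintype G.ConnectedComponent := Fintype.ofFinite _
  rw [Pw]
  rw [← Finset.sum_fiberwise (univ : Finset V) (fun v => G.connectedComponentMk v)
    (fun v => Finsupp.single (κ (G.connectedComponentMk v)) (w v))]
  refine Finset.sum_congr rfl fun c _ => ?_
  rw [fC_eq]
  have h1 : ∀ v ∈ univ.filter (fun v => G.connectedComponentMk v = c),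
      Finsupp.single (κ (G.connectedComponentMk v)) (w v) =
        Finsupp.singleAddHom (κ c) (w v) := by
    intro v hv
    rw [(Finset.mem_filter.mp hv).2]
    rfl
  rw [Finset.sum_congr rfl h1, ← map_sum]
  rfl

lemma pProd_piW (G : SimpleGraph V) (w : V → ℕ) :
    letI : Fintype G.ConnectedComponent := Fintype.ofFinite _
    pProd (piW G w) = ∏ c : G.ConnectedComponent, psum (fC G w c) := by
  rw [piW, pProd, Multiset.map_map]
  rfl

open scoped Classical in
lemma coeff_pProd (G : SimpleGraph V) {w : V → ℕ} (hw : ∀ v, 0 < w v) (d : ℕ →₀ ℕ) :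
    pProd (piW G w) d =
      (((Om (V := V) d).filter
        (fun k => (∀ u v, G.Reachable u v → k u = k v) ∧ Pw w k = d)).card : ℤ) := by
  classical
  letI : Fintype G.ConnectedComponent := Fintype.ofFinite _
  have h1 : pProd (piW G w) d
      = MvPowerSeries.coeff (R := ℤ) d (∏ c : G.ConnectedComponent, psum (fC G w c)) := by
    rw [pProd_piW]; rfl
  rw [h1, MvPowerSeries.coeff_prod]
  have h2 : ∀ l : G.ConnectedComponent →₀ (ℕ →₀ ℕ),
      (∏ c : G.ConnectedComponent, MvPowerSeries.coeff (R := ℤ) (l c) (psum (fC G w c)))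
        = if (∀ c ∈ (univ : Finset G.ConnectedComponent),
            ∃ i, l c = Finsupp.single i (fC G w c)) then (1 : ℤ) else 0 := by
    intro l
    by_cases h : ∀ c ∈ (univ : Finset G.ConnectedComponent),
        ∃ i, l c = Finsupp.single i (fC G w c)
    · rw [if_pos h]
      refine Finset.prod_eq_one fun c _ => ?_
      show (if ∃ i, l c = Finsupp.single i (fC G w c) then (1:ℤ) else 0) = 1
      rw [if_pos (h c (Finset.mem_univ c))]
    · rw [if_neg h]
      push_neg at h
      obtain ⟨c, -, hc⟩ := h
      refine Finset.prod_eq_zero (Finset.mem_univ c) ?_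
      show (if ∃ i, l c = Finsupp.single i (fC G w c) then (1:ℤ) else 0) = 0
      rw [if_neg (not_exists.mpr hc)]
  rw [Finset.sum_congr rfl (fun l _ => h2 l), Finset.sum_boole]
  congr 1
  refine (Finset.card_bij
    (fun (k : V → ℕ) _ => Finsupp.equivFunOnFinite.symm
      (fun c : G.ConnectedComponent => Finsupp.single (k c.out) (fC G w c))) ?_ ?_ ?_).symm
  · -- maps into the filter
    intro k hk
    simp only [Finset.mem_filter] at hk ⊢
    have hconst := hk.2.1
    have hPw := hk.2.2
    have hfun : (fun v => k ((G.connectedComponentMk v).out)) = k := by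
      funext v
      exact hconst _ _ (ConnectedComponent.exact (G.connectedComponentMk v).out_eq)
    constructor
    · rw [Finset.mem_finsuppAntidiag]
      refine ⟨?_, fun c _ => Finset.mem_univ c⟩
      have := Pw_comp G w (fun c => k c.out)
      beta_reduce at this
      rw [hfun] at this
      rw [Finsupp.coe_equivFunOnFinite_symm]
      rw [← this, hPw]
    · intro c _
      refine ⟨k c.out, ?_⟩
      rw [Finsupp.coe_equivFunOnFinite_symm]
  · -- injective
    intro k hk k' hk' heq
    simp only [Finset.mem_filter] at hk hk'
    funext v
    have h3 : k ((G.connectedComponentMk v).out) = k' ((G.connectedComponentMk v).out) := by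
      have := congrFun (congrArg (DFunLike.coe) heq) (G.connectedComponentMk v)
      rw [Finsupp.coe_equivFunOnFinite_symm, Finsupp.coe_equivFunOnFinite_symm] at this
      exact (Finsupp.single_left_inj (fC_pos G hw _).ne').mp this
    have e1 := hk.2.1 _ _ (ConnectedComponent.exact (G.connectedComponentMk v).out_eq)
    have e2 := hk'.2.1 _ _ (ConnectedComponent.exact (G.connectedComponentMk v).out_eq)
    rw [← e1, ← e2, h3]
  · -- surjective
    intro l hl
    simp only [Finset.mem_filter, Finset.mem_finsuppAntidiag] at hl
    obtain ⟨⟨hsum, -⟩, hex⟩ := hl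
    choose ι hι using fun c => hex c (Finset.mem_univ c)
    refine ⟨fun v => ι (G.connectedComponentMk v), ?_, ?_⟩
    · have hPw : Pw w (fun v => ι (G.connectedComponentMk v)) = d := by
        rw [Pw_comp G w ι]
        rw [← hsum]
        exact Finset.sum_congr rfl fun c _ => (hι c).symm
      simp only [Finset.mem_filter]
      refine ⟨?_, ?_, hPw⟩
      · simp only [Om, Fintype.mem_piFinset]
        exact fun v => color_mem_support hw hPw v
      · intro u v huv
        rw [ConnectedComponent.sound huv]
    · refine DFunLike.ext _ _ fun c => ?_
      rw [Finsupp.coe_equivFunOnFinite_symm]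
      beta_reduce
      rw [show G.connectedComponentMk c.out = c from c.out_eq, hι c]

end Aux

/-- an edge is monochromatic under `k` -/
def mono {V : Type*} (k : V → ℕ) (e : Sym2 V) : Prop :=
  ∀ u v : V, e = s(u, v) → k u = k v

lemma const_iff_mono (A : Finset (Sym2 V)) (k : V → ℕ) :
    (∀ u v, (fromEdgeSet (↑A : Set (Sym2 V))).Reachable u v → k u = k v) ↔
      ∀ e ∈ A, mono k e := by
  constructor
  · intro h e he
    intro u v huv
    subst huv
    rcases eq_or_ne u v with rfl | hne
    · rfl
    · exact h u v (SimpleGraph.Adj.reachable (by rw [fromEdgeSet_adj]; exact ⟨he, hne⟩))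
  · intro h u v hr
    obtain ⟨p⟩ := hr
    induction p with
    | nil => rfl
    | cons hadj p ih =>
      rw [fromEdgeSet_adj] at hadj
      exact (h _ hadj.1 _ _ rfl).trans ih

lemma proper_iff_mono (E : Finset (Sym2 V)) (k : V → ℕ) :
    ProperCol (↑E : Set (Sym2 V)) k ↔ ∀ e ∈ E, ¬ mono k e := by
  constructor
  · intro h e he hm
    induction e with
    | _ u v => exact h u v he (hm u v rfl)
  · intro h u v hmem heq
    refine h _ hmem ?_
    intro u' v' he
    rcases Sym2.eq_iff.mp he.symm with ⟨rfl, rfl⟩ | ⟨rfl, rfl⟩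
    · exact heq
    · exact heq.symm

lemma neg_one_pow_mul_apply (n : ℕ) (F : MvPowerSeries ℕ ℤ) (d : ℕ →₀ ℕ) :
    ((-1 : MvPowerSeries ℕ ℤ) ^ n * F) d = (-1 : ℤ) ^ n * F d := by
  have h : (-1 : MvPowerSeries ℕ ℤ) ^ n = MvPowerSeries.C (σ := ℕ) (R := ℤ) ((-1 : ℤ) ^ n) := by
    rw [map_pow, map_neg, map_one]
  rw [h]
  exact MvPowerSeries.coeff_C_mul d F _

/-- the weighted power-sum expansion
`X_{(G,w)} = Σ_{A ⊆ E} (-1)^(|A|) p_{π(G,w,A)}`. -/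
theorem stmt6 {V : Type*} [Fintype V] (E : Finset (Sym2 V)) (w : V → Nat)
    (hw : ∀ v, 0 < w v) :
    csfW (E : Set (Sym2 V)) w = ∑ A ∈ E.powerset,
      (-1 : MvPowerSeries Nat Int) ^ A.card *
        pProd (piW (SimpleGraph.fromEdgeSet (A : Set (Sym2 V))) w) := by
  classical
  apply MvPowerSeries.ext
  intro d
  rw [map_sum]
  have hL : MvPowerSeries.coeff (R := ℤ) d (csfW (↑E : Set (Sym2 V)) w) =
      ((Om (V := V) d).filter (fun k => ProperCol (↑E : Set (Sym2 V)) k ∧ Pw w k = d)).card := by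
    show (Nat.card {k : V → ℕ | ProperCol (↑E : Set (Sym2 V)) k ∧
        ∀ i : ℕ, (∑ᶠ v ∈ {v : V | k v = i}, w v) = d i} : ℤ) = _
    rw [show {k : V → ℕ | ProperCol (↑E : Set (Sym2 V)) k ∧
        ∀ i : ℕ, (∑ᶠ v ∈ {v : V | k v = i}, w v) = d i}
      = {k : V → ℕ | ProperCol (↑E : Set (Sym2 V)) k ∧ Pw w k = d} from by
        ext k
        exact and_congr Iff.rfl (prof_iff w k d)]
    exact card_eq hw d _
  rw [hL]
  have hR : ∀ A ∈ E.powerset,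
      MvPowerSeries.coeff (R := ℤ) d ((-1 : MvPowerSeries ℕ ℤ) ^ A.card *
          pProd (piW (SimpleGraph.fromEdgeSet (↑A : Set (Sym2 V))) w)) =
        ∑ k ∈ Om (V := V) d,
          (-1 : ℤ) ^ A.card * (if (∀ e ∈ A, mono k e) ∧ Pw w k = d then 1 else 0) := by
    intro A _
    have h1 : MvPowerSeries.coeff (R := ℤ) d ((-1 : MvPowerSeries ℕ ℤ) ^ A.card *
        pProd (piW (SimpleGraph.fromEdgeSet (↑A : Set (Sym2 V))) w)) =
        (-1 : ℤ) ^ A.card *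
          pProd (piW (SimpleGraph.fromEdgeSet (↑A : Set (Sym2 V))) w) d :=
      neg_one_pow_mul_apply _ _ d
    rw [h1, coeff_pProd _ hw d, ← Finset.mul_sum]
    congr 1
    rw [Finset.sum_boole]
    congr 1
    congr 1
    ext k
    simp only [Finset.mem_filter]
    refine and_congr Iff.rfl ?_
    exact and_congr (const_iff_mono A k) Iff.rfl
  rw [Finset.sum_congr rfl hR, Finset.sum_comm]
  rw [← Finset.sum_boole]
  refine Finset.sum_congr rfl fun k _ => ?_
  by_cases hd : Pw w k = d
  · simp only [hd, and_true]
    have key : ∀ A ∈ E.powerset,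
        ((-1 : ℤ) ^ A.card * if (∀ e ∈ A, mono k e) then 1 else 0) =
          if A ∈ (E.filter (mono k)).powerset then (-1 : ℤ) ^ A.card else 0 := by
      intro A hA
      have hAE : A ⊆ E := Finset.mem_powerset.mp hA
      by_cases hm : ∀ e ∈ A, mono k e
      · rw [if_pos hm, mul_one, if_pos]
        rw [Finset.mem_powerset]
        intro e he
        exact Finset.mem_filter.mpr ⟨hAE he, hm e he⟩
      · rw [if_neg hm, mul_zero, if_neg]
        rw [Finset.mem_powerset]
        intro hsub
        exact hm fun e he => (Finset.mem_filter.mp (hsub he)).2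
    rw [Finset.sum_congr rfl key, Finset.sum_ite_mem,
      Finset.inter_eq_right.mpr (Finset.powerset_mono.mpr (Finset.filter_subset _ _)),
      Finset.sum_powerset_neg_one_pow_card]
    refine (if_congr ?_ rfl rfl).symm
    rw [proper_iff_mono, Finset.filter_eq_empty_iff]
  · simp only [hd, and_false, if_false, mul_zero, Finset.sum_const_zero]
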